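/- In a condensed multi-Catalan tableau, every box in an A-row that is not forced to be empty by having an α below it in the same column must contain an α, and every box in an A-column that is not forced to be empty by having a β to its right in the same row must contain a β; consequently the filling of the whole tableau is uniquely determined by the filling of the DE boxes that do not lie above an A-row or left of an A-column. -/
import Mathlib


inductive MSym : Type
  | a | b | x
deriving DecidableEq

inductive Letter : Type
  | D | E | A
deriving DecidableEq

/-- The content of the diagonal box of row `i` in a staircase filling of size `n`
(boxes `(i, j)` with `i + j < n`; the diagonal box of row `i` is `(i, n-1-i)`). -/
def diagRow (n : ℕ) (F : Fin n → Fin n → Option MSym) (i : Fin n) : Option MSym :=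
  F i ⟨n - 1 - (i : ℕ), by have := i.isLt; omega⟩

def diagCol (n : ℕ) (F : Fin n → Fin n → Option MSym) (j : Fin n) : Option MSym :=
  F ⟨n - 1 - (j : ℕ), by have := j.isLt; omega⟩ j

/-- A box is forced to be empty if there is a `β` to its right in its row or an `α`
below it in its column. -/
def ForcedEmpty (n : ℕ) (F : Fin n → Fin n → Option MSym) (i j : Fin n) : Prop :=
  (∃ j' : Fin n, j < j' ∧ F i j' = some MSym.b) ∨ (∃ i' : Fin n, i < i' ∧ F i' j = some MSym.a)

/-- A multi-Catalan tableau of size `n`: every box on the diagonal is filled (α, β or x);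
a box left of a β in its row or above an α in its column is empty; a non-forced box in a
D-row and E-column contains α or β; in a D-row and A-column contains β; in an A-row and
E-column contains α; every other box is empty. -/
def IsMCT (n : ℕ) (F : Fin n → Fin n → Option MSym) : Prop :=
  (∀ i j : Fin n, n ≤ (i : ℕ) + (j : ℕ) → F i j = none) ∧
  (∀ i : Fin n, diagRow n F i ≠ none) ∧
  (∀ i j : Fin n, (i : ℕ) + (j : ℕ) < n - 1 →
    (ForcedEmpty n F i j → F i j = none) ∧
    (¬ ForcedEmpty n F i j →
      match diagRow n F i, diagCol n F j with
      | some MSym.a, some MSym.b => F i j = some MSym.a ∨ F i j = some MSym.b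
      | some MSym.a, some MSym.x => F i j = some MSym.b
      | some MSym.x, some MSym.b => F i j = some MSym.a
      | _, _ => F i j = none))

def symToLetter : Option MSym → Letter
  | some MSym.a => Letter.D
  | some MSym.b => Letter.E
  | _ => Letter.A

/-- The type of a tableau: the word in {D, E, A} read off the diagonal from top to bottom. -/
def typeWord (n : ℕ) (F : Fin n → Fin n → Option MSym) : List Letter :=
  List.ofFn fun i : Fin n => symToLetter (diagRow n F i)

def countSym (n : ℕ) (F : Fin n → Fin n → Option MSym) (s : MSym) : ℕ :=
  (Finset.univ.filter fun p : Fin n × Fin n => F p.1 p.2 = some s).card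

/-- The weight of a tableau: the product of all its α's and β's. -/
noncomputable def wt (n : ℕ) (α β : ℝ) (F : Fin n → Fin n → Option MSym) : ℝ :=
  α ^ countSym n F MSym.a * β ^ countSym n F MSym.b

/-- The weight generating function of a word: the sum of the weights over all
multi-Catalan tableaux of that type. -/
noncomputable def wordWeight (α β : ℝ) (X : List Letter) : ℝ :=
  ∑ᶠ T : {F : Fin X.length → Fin X.length → Option MSym //
      IsMCT X.length F ∧ typeWord X.length F = X}, wt X.length α β T.1

lemma diagCol_eq_diagRow (n : ℕ) (F : Fin n → Fin n → Option MSym) (j : Fin n) :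
    diagCol n F j = diagRow n F ⟨n - 1 - (j : ℕ), by have := j.isLt; omega⟩ := by
  have hj := j.isLt
  simp only [diagCol, diagRow]
  congr 1
  apply Fin.ext
  show (j : ℕ) = n - 1 - (n - 1 - (j : ℕ))
  omega

lemma diagCol_ne_none (n : ℕ) (F : Fin n → Fin n → Option MSym) (hF : IsMCT n F)
    (j : Fin n) : diagCol n F j ≠ none := by
  rw [diagCol_eq_diagRow]; exact hF.2.1 _

lemma diag_box_eq (n : ℕ) (F : Fin n → Fin n → Option MSym) (i j : Fin n)
    (h : (i : ℕ) + (j : ℕ) = n - 1) : F i j = diagRow n F i := by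
  have hi := i.isLt
  have hj : j = ⟨n - 1 - (i : ℕ), by omega⟩ := Fin.ext (by show (j:ℕ) = n - 1 - (i:ℕ); omega)
  rw [hj]; rfl

lemma no_b_row_x (n : ℕ) (F : Fin n → Fin n → Option MSym) (hF : IsMCT n F)
    (i : Fin n) (hx : diagRow n F i = some MSym.x) (j : Fin n) : F i j ≠ some MSym.b := by
  obtain ⟨hout, hdiag, hrule⟩ := hF
  intro hb
  have hi := i.isLt; have hj := j.isLt
  rcases lt_trichotomy ((i:ℕ)+(j:ℕ)) (n-1) with h | h | h
  · obtain ⟨hfe, hnfe⟩ := hrule i j h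
    by_cases hf : ForcedEmpty n F i j
    · rw [hfe hf] at hb; cases hb
    · have h2 := hnfe hf
      rw [hx] at h2
      cases hc : diagCol n F j with
      | none => rw [hc] at h2; rw [h2] at hb; cases hb
      | some s => cases s <;> rw [hc] at h2 <;> rw [h2] at hb <;> simp at hb
  · rw [diag_box_eq n F i j h, hx] at hb; simp at hb
  · rw [hout i j (by omega)] at hb; cases hb

lemma no_a_col_x (n : ℕ) (F : Fin n → Fin n → Option MSym) (hF : IsMCT n F)
    (j : Fin n) (hx : diagCol n F j = some MSym.x) (i : Fin n) : F i j ≠ some MSym.a := by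
  obtain ⟨hout, hdiag, hrule⟩ := hF
  intro ha
  have hi := i.isLt; have hj := j.isLt
  rcases lt_trichotomy ((i:ℕ)+(j:ℕ)) (n-1) with h | h | h
  · obtain ⟨hfe, hnfe⟩ := hrule i j h
    by_cases hf : ForcedEmpty n F i j
    · rw [hfe hf] at ha; cases ha
    · have h2 := hnfe hf
      rw [hx] at h2
      cases hr : diagRow n F i with
      | none => rw [hr] at h2; rw [h2] at ha; cases ha
      | some s => cases s <;> rw [hr] at h2 <;> rw [h2] at ha <;> simp at ha
  · have : F i j = diagCol n F j := by
      have hieq : i = ⟨n - 1 - (j : ℕ), by omega⟩ :=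
        Fin.ext (by show (i:ℕ) = n - 1 - (j:ℕ); omega)
      rw [hieq]; rfl
    rw [this, hx] at ha; simp at ha
  · rw [hout i j (by omega)] at ha; cases ha

lemma val_row_b (n : ℕ) (F : Fin n → Fin n → Option MSym) (hF : IsMCT n F)
    (i j : Fin n) (hb : diagRow n F i = some MSym.b) (hint : (i:ℕ) + (j:ℕ) < n - 1) :
    F i j = none := by
  obtain ⟨hout, hdiag, hrule⟩ := hF
  obtain ⟨hfe, hnfe⟩ := hrule i j hint
  by_cases hf : ForcedEmpty n F i j
  · exact hfe hf
  · have h2 := hnfe hf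
    rw [hb] at h2
    cases hc : diagCol n F j with
    | none => rw [hc] at h2; exact h2
    | some s => cases s <;> rw [hc] at h2 <;> exact h2

lemma val_col_a (n : ℕ) (F : Fin n → Fin n → Option MSym) (hF : IsMCT n F)
    (i j : Fin n) (ha : diagCol n F j = some MSym.a) (hint : (i:ℕ) + (j:ℕ) < n - 1) :
    F i j = none := by
  obtain ⟨hout, hdiag, hrule⟩ := hF
  obtain ⟨hfe, hnfe⟩ := hrule i j hint
  by_cases hf : ForcedEmpty n F i j
  · exact hfe hf
  · have h2 := hnfe hf
    rw [ha] at h2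
    cases hr : diagRow n F i with
    | none => rw [hr] at h2; exact h2
    | some s => cases s <;> rw [hr] at h2 <;> exact h2

lemma val_xx (n : ℕ) (F : Fin n → Fin n → Option MSym) (hF : IsMCT n F)
    (i j : Fin n) (hr : diagRow n F i = some MSym.x) (hc : diagCol n F j = some MSym.x)
    (hint : (i:ℕ) + (j:ℕ) < n - 1) : F i j = none := by
  obtain ⟨hout, hdiag, hrule⟩ := hF
  obtain ⟨hfe, hnfe⟩ := hrule i j hint
  by_cases hf : ForcedEmpty n F i j
  · exact hfe hf
  · have h2 := hnfe hf
    rw [hr, hc] at h2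
    exact h2

/-- Every box in an A-row (not in an A-column) that is not forced empty by an α below it
contains an α; every box in an A-column (not in an A-row) that is not forced empty by a
β to its right contains a β; consequently, a multi-Catalan tableau is uniquely
determined by its type and the filling of its DE boxes. -/
theorem A_row_column_determined (n : ℕ) (F : Fin n → Fin n → Option MSym)
    (hF : IsMCT n F) :
    (∀ i0 j : Fin n, diagRow n F i0 = some MSym.x → (j : ℕ) < n - 1 - (i0 : ℕ) →
      diagCol n F j ≠ some MSym.x →
      (¬ ∃ i' : Fin n, i0 < i' ∧ F i' j = some MSym.a) → F i0 j = some MSym.a) ∧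
    (∀ i j0 : Fin n, diagCol n F j0 = some MSym.x → (i : ℕ) < n - 1 - (j0 : ℕ) →
      diagRow n F i ≠ some MSym.x →
      (¬ ∃ j' : Fin n, j0 < j' ∧ F i j' = some MSym.b) → F i j0 = some MSym.b) ∧
    (∀ G : Fin n → Fin n → Option MSym, IsMCT n G → typeWord n G = typeWord n F →
      (∀ i j : Fin n, diagRow n F i = some MSym.a → diagCol n F j = some MSym.b →
        G i j = F i j) →
      G = F) := by
  obtain ⟨hout, hdiag, hrule⟩ := id hF
  refine ⟨?_, ?_, ?_⟩
  · -- Part 1: A-row boxes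
    intro i0 j hx hj hcne hna
    have hi0 := i0.isLt; have hjl := j.isLt
    have hint : (i0:ℕ) + (j:ℕ) < n - 1 := by omega
    cases hc : diagCol n F j with
    | none => exact absurd hc (diagCol_ne_none n F hF j)
    | some s =>
      cases s with
      | x => exact absurd hc hcne
      | a =>
        exfalso; apply hna
        refine ⟨⟨n - 1 - (j:ℕ), by omega⟩, ?_, hc⟩
        show (i0:ℕ) < n - 1 - (j:ℕ); omega
      | b =>
        have hnf : ¬ ForcedEmpty n F i0 j := by
          intro h
          unfold ForcedEmpty at h
          rcases h with ⟨j', _, hb⟩ | hA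
          · exact no_b_row_x n F hF i0 hx j' hb
          · exact hna hA
        have h2 := (hrule i0 j hint).2 hnf
        rw [hx, hc] at h2
        exact h2
  · -- Part 2: A-column boxes
    intro i j0 hx hi hrne hnb
    have hil := i.isLt; have hj0 := j0.isLt
    have hint : (i:ℕ) + (j0:ℕ) < n - 1 := by omega
    cases hr : diagRow n F i with
    | none => exact absurd hr (hdiag i)
    | some s =>
      cases s with
      | x => exact absurd hr hrne
      | b =>
        exfalso; apply hnb
        refine ⟨⟨n - 1 - (i:ℕ), by omega⟩, ?_, hr⟩
        show (j0:ℕ) < n - 1 - (i:ℕ); omega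
      | a =>
        have hnf : ¬ ForcedEmpty n F i j0 := by
          intro h
          unfold ForcedEmpty at h
          rcases h with hB | ⟨i', _, ha⟩
          · exact hnb hB
          · exact no_a_col_x n F hF j0 hx i' ha
        have h2 := (hrule i j0 hint).2 hnf
        rw [hr, hx] at h2
        exact h2
  · -- Part 3: uniqueness
    intro G hG htype hDE
    have hrow : ∀ i, diagRow n G i = diagRow n F i := by
      intro i
      unfold typeWord at htype
      have h1 := congrFun (List.ofFn_inj.mp htype) i
      have hg := hG.2.1 i
      have hf := hdiag i
      cases hgv : diagRow n G i with
      | none => exact absurd hgv hg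
      | some s =>
        cases hfv : diagRow n F i with
        | none => exact absurd hfv hf
        | some t =>
          rw [hgv, hfv] at h1
          cases s <;> cases t <;> simp_all [symToLetter]
    have hcol : ∀ j, diagCol n G j = diagCol n F j := by
      intro j
      rw [diagCol_eq_diagRow, diagCol_eq_diagRow]
      exact hrow _
    have key : ∀ k : ℕ, ∀ i j : Fin n, n - (i:ℕ) + (n - (j:ℕ)) ≤ k → G i j = F i j := by
      intro k
      induction k with
      | zero => intro i j hk; have := i.isLt; have := j.isLt; omega
      | succ k ih =>
        intro i j hk
        have hi := i.isLt; have hj := j.isLt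
        rcases lt_trichotomy ((i:ℕ)+(j:ℕ)) (n-1) with hlt | heq | hgt
        · cases hr : diagRow n F i with
          | none => exact absurd hr (hdiag i)
          | some r =>
            have hGr : diagRow n G i = some r := by rw [hrow]; exact hr
            cases hc : diagCol n F j with
            | none => exact absurd hc (diagCol_ne_none n F hF j)
            | some c =>
              have hGc : diagCol n G j = some c := by rw [hcol]; exact hc
              cases r with
              | b =>
                rw [val_row_b n F hF i j hr hlt, val_row_b n G hG i j hGr hlt]
              | a =>
                cases c with
                | a =>
                  rw [val_col_a n F hF i j hc hlt, val_col_a n G hG i j hGc hlt]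
                | b => exact hDE i j hr hc
                | x =>
                  -- DA box: depends on betas to the right
                  have hib : ∀ j' : Fin n, j < j' → G i j' = F i j' := by
                    intro j' hjj'
                    apply ih
                    have h1 := j'.isLt
                    have h2 : (j:ℕ) < (j':ℕ) := hjj'
                    omega
                  have hfe_iff : ForcedEmpty n G i j ↔ ForcedEmpty n F i j := by
                    unfold ForcedEmpty
                    constructor
                    · rintro (⟨j', hjj', hb⟩ | ⟨i', hii', ha⟩)
                      · exact Or.inl ⟨j', hjj', by rw [← hib j' hjj']; exact hb⟩
                      · exact absurd ha (no_a_col_x n G hG j hGc i')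
                    · rintro (⟨j', hjj', hb⟩ | ⟨i', hii', ha⟩)
                      · exact Or.inl ⟨j', hjj', by rw [hib j' hjj']; exact hb⟩
                      · exact absurd ha (no_a_col_x n F hF j hc i')
                  by_cases hf : ForcedEmpty n F i j
                  · rw [(hrule i j hlt).1 hf, (hG.2.2 i j hlt).1 (hfe_iff.mpr hf)]
                  · have h2 := (hrule i j hlt).2 hf
                    have h3 := (hG.2.2 i j hlt).2 (fun h => hf (hfe_iff.mp h))
                    rw [hr, hc] at h2
                    rw [hGr, hGc] at h3
                    rw [h2, h3]
              | x =>
                cases c with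
                | a =>
                  rw [val_col_a n F hF i j hc hlt, val_col_a n G hG i j hGc hlt]
                | x =>
                  rw [val_xx n F hF i j hr hc hlt, val_xx n G hG i j hGr hGc hlt]
                | b =>
                  -- AE box: depends on alphas below
                  have hib : ∀ i' : Fin n, i < i' → G i' j = F i' j := by
                    intro i' hii'
                    apply ih
                    have h1 := i'.isLt
                    have h2 : (i:ℕ) < (i':ℕ) := hii'
                    omega
                  have hfe_iff : ForcedEmpty n G i j ↔ ForcedEmpty n F i j := by
                    unfold ForcedEmpty
                    constructor
                    · rintro (⟨j', hjj', hb⟩ | ⟨i', hii', ha⟩)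
                      · exact absurd hb (no_b_row_x n G hG i hGr j')
                      · exact Or.inr ⟨i', hii', by rw [← hib i' hii']; exact ha⟩
                    · rintro (⟨j', hjj', hb⟩ | ⟨i', hii', ha⟩)
                      · exact absurd hb (no_b_row_x n F hF i hr j')
                      · exact Or.inr ⟨i', hii', by rw [hib i' hii']; exact ha⟩
                  by_cases hf : ForcedEmpty n F i j
                  · rw [(hrule i j hlt).1 hf, (hG.2.2 i j hlt).1 (hfe_iff.mpr hf)]
                  · have h2 := (hrule i j hlt).2 hf
                    have h3 := (hG.2.2 i j hlt).2 (fun h => hf (hfe_iff.mp h))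
                    rw [hr, hc] at h2
                    rw [hGr, hGc] at h3
                    rw [h2, h3]
        · rw [diag_box_eq n F i j heq, diag_box_eq n G i j heq]
          exact hrow i
        · rw [hout i j (by omega), hG.1 i j (by omega)]
    funext i j
    exact key (n - (i:ℕ) + (n - (j:ℕ))) i j le_rfl
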